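/- Let H_3 have orthonormal basis {|0⟩,|1⟩,|2⟩}, and let A_1 = |0⟩⟨0| + i|1⟩⟨1|, A_2 = |1⟩⟨1| + i|2⟩⟨2|, S = span{A_1, A_2}. Then for every positive integer N, there is no nonzero positive semidefinite operator ρ on H_3^{⊗N} satisfying Tr(ρ·M) = 0 for all M ∈ S^{⊗N}, even though S contains no positive definite operator. -/

import Mathlib

open Matrix
open scoped ComplexOrder

/-- The `N`-fold tensor (Kronecker) power: the tensor product `A 0 ⊗ ⋯ ⊗ A (N-1)`
realized as a matrix indexed by `Fin N → Fin d`. -/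
noncomputable def tensorProd {d N : ℕ} (A : Fin N → Matrix (Fin d) (Fin d) ℂ) :
    Matrix (Fin N → Fin d) (Fin N → Fin d) ℂ :=
  fun j k => ∏ i, A i (j i) (k i)

/-- `S^{⊗N}`: the span of all `A_1 ⊗ ⋯ ⊗ A_N` with each `A_i ∈ S`. -/
noncomputable def tensorPowSpan {d : ℕ} (S : Submodule ℂ (Matrix (Fin d) (Fin d) ℂ)) (N : ℕ) :
    Submodule ℂ (Matrix (Fin N → Fin d) (Fin N → Fin d) ℂ) :=
  Submodule.span ℂ {M | ∃ A : Fin N → Matrix (Fin d) (Fin d) ℂ, (∀ i, A i ∈ S) ∧ M = tensorProd A}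

noncomputable def vv : Fin 2 → Fin 3 → ℂ
  | 0 => ![1, Complex.I, 0]
  | 1 => ![0, 1, Complex.I]

lemma key : ∀ (N : ℕ) (p : (Fin N → Fin 3) → ℝ), (∀ j, 0 ≤ p j) →
    (∀ ε : Fin N → Fin 2, ∑ j, (p j : ℂ) * ∏ i, vv (ε i) (j i) = 0) →
    ∀ j, p j = 0 := by
  intro N
  induction N with
  | zero =>
    intro p hp h j
    have h0 := h (fun i => i.elim0)
    rw [Fintype.sum_unique] at h0
    simp at h0
    have h0' : p j = 0 := by convert h0 using 2
    exact h0'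
  | succ N ih =>
    intro p hp h
    set q : Fin 3 → (Fin N → Fin 3) → ℝ := fun k j' => p (Fin.cons k j') with hq
    have hsplit : ∀ (e : Fin 2) (ε' : Fin N → Fin 2),
        ∑ k : Fin 3, vv e k * ∑ j', (q k j' : ℂ) * ∏ i, vv (ε' i) (j' i) = 0 := by
      intro e ε'
      have h0 := h (Fin.cons e ε')
      rw [← Equiv.sum_comp (Fin.consEquiv fun _ => Fin 3)] at h0
      rw [Fintype.sum_prod_type] at h0
      rw [← h0]
      refine Finset.sum_congr rfl fun k _ => ?_
      rw [Finset.mul_sum]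
      refine Finset.sum_congr rfl fun j' _ => ?_
      rw [Fin.prod_univ_succ]
      simp [Fin.consEquiv, q]
      ring
    set T : Fin 3 → (Fin N → Fin 2) → ℂ :=
      fun k ε' => ∑ j', (q k j' : ℂ) * ∏ i, vv (ε' i) (j' i) with hT
    have h1 : ∀ ε', T 0 ε' + Complex.I * T 1 ε' = 0 := by
      intro ε'
      have := hsplit 0 ε'
      rw [Fin.sum_univ_three] at this
      simpa [vv, T] using this
    have h2 : ∀ ε', T 1 ε' + Complex.I * T 2 ε' = 0 := by
      intro ε'
      have := hsplit 1 ε'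
      rw [Fin.sum_univ_three] at this
      simpa [vv, T] using this
    have h02 : ∀ ε', T 0 ε' + T 2 ε' = 0 := by
      intro ε'
      have e1 := h1 ε'; have e2 := h2 ε'
      have h1' : T 0 ε' = - Complex.I * T 1 ε' := by linear_combination e1
      have h2' : T 1 ε' = - Complex.I * T 2 ε' := by linear_combination e2
      rw [h1', h2']; ring_nf
      rw [Complex.I_sq]; ring
    have hq02 : ∀ j', q 0 j' + q 2 j' = 0 := by
      refine ih (fun j' => q 0 j' + q 2 j') (fun j' => add_nonneg (hp _) (hp _)) ?_
      intro ε'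
      have := h02 ε'
      rw [hT] at this
      rw [← this, ← Finset.sum_add_distrib]
      push_cast
      refine Finset.sum_congr rfl fun j' _ => by ring
    have hq0 : ∀ j', q 0 j' = 0 := fun j' => by
      have := hq02 j'; have := hp (Fin.cons 0 j'); have := hp (Fin.cons 2 j')
      simp only [hq] at *; linarith
    have hq2 : ∀ j', q 2 j' = 0 := fun j' => by
      have := hq02 j'; have h0 := hq0 j'; linarith
    have hq1 : ∀ j', q 1 j' = 0 := by
      refine ih (q 1) (fun j' => hp _) ?_
      intro ε'
      have e2 := h2 ε'
      have hT2 : T 2 ε' = 0 := by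
        rw [hT]; simp only []
        refine Finset.sum_eq_zero fun j' _ => by rw [hq2 j']; simp
      have hT1 : T 1 ε' = 0 := by
        rw [hT2] at e2; simpa using e2
      rw [hT] at hT1; exact hT1
    intro j
    have hj : p j = q (j 0) (Fin.tail j) := by rw [hq]; simp [Fin.cons_self_tail]
    rw [hj]
    have : (j 0 = 0) ∨ (j 0 = 1) ∨ (j 0 = 2) := by omega
    rcases this with h' | h' | h' <;> rw [h']
    · exact hq0 _
    · exact hq1 _
    · exact hq2 _

lemma diag_entry_psd {n : Type*} [Fintype n] [DecidableEq n]
    {ρ : Matrix n n ℂ} (hρ : ρ.PosSemidef) (j : n) : 0 ≤ ρ j j := by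
  exact hρ.diag_nonneg

lemma psd_diag_zero_eq_zero {n : Type*} [Fintype n] [DecidableEq n]
    {ρ : Matrix n n ℂ} (hρ : ρ.PosSemidef) (hd : ∀ j, ρ j j = 0) : ρ = 0 := by
  ext k j
  have h1 : star (Pi.single j 1 : n → ℂ) ⬝ᵥ ρ *ᵥ (Pi.single j 1) = 0 := by
    simpa [dotProduct, mulVec, Pi.single_apply] using hd j
  have h2 := (hρ.dotProduct_mulVec_zero_iff (Pi.single j 1)).mp h1
  have := congrFun h2 k
  simpa [mulVec, dotProduct, Pi.single_apply] using this

/-- for `A_1 = |0⟩⟨0| + i|1⟩⟨1|`, `A_2 = |1⟩⟨1| + i|2⟩⟨2|` and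
`S = span{A_1, A_2}`, no tensor power `S^{⊗N}` admits a nonzero positive semidefinite
operator in its orthogonal complement, even though `S` contains no positive definite
operator. -/
theorem counterexample_no_parallel_distinguishability
    (A₁ A₂ : Matrix (Fin 3) (Fin 3) ℂ)
    (hA₁ : A₁ = Matrix.diagonal ![1, Complex.I, 0])
    (hA₂ : A₂ = Matrix.diagonal ![0, 1, Complex.I])
    (S : Submodule ℂ (Matrix (Fin 3) (Fin 3) ℂ))
    (hS : S = Submodule.span ℂ {A₁, A₂}) :
    (¬ ∃ P ∈ S, P.PosDef) ∧
    ∀ N : ℕ, 1 ≤ N →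
      ¬ ∃ ρ : Matrix (Fin N → Fin 3) (Fin N → Fin 3) ℂ,
        ρ.PosSemidef ∧ ρ ≠ 0 ∧ ∀ M ∈ tensorPowSpan S N, (ρ * M).trace = 0 := by
  constructor
  · rintro ⟨P, hPS, hPD⟩
    rw [hS, Submodule.mem_span_pair] at hPS
    obtain ⟨a, b, rfl⟩ := hPS
    have diagpos : ∀ k : Fin 3, 0 < (a • A₁ + b • A₂) k k := by
      intro k
      exact hPD.diag_pos
    have h0 := diagpos 0
    have h1 := diagpos 1
    have h2 := diagpos 2
    simp only [hA₁, hA₂, Matrix.add_apply, Matrix.smul_apply, Matrix.diagonal_apply_eq,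
      Matrix.cons_val_zero, Matrix.cons_val_one, Matrix.head_cons, smul_eq_mul] at h0 h1 h2
    rw [Complex.lt_def] at h0 h1 h2
    simp [Complex.add_re, Complex.add_im, Complex.mul_re, Complex.mul_im] at h0 h1 h2
    obtain ⟨h0i, h0r⟩ := h0
    obtain ⟨h1i, h1r⟩ := h1
    obtain ⟨h2i, h2r⟩ := h2
    linarith
  · intro N _
    rintro ⟨ρ, hρ, hne, horth⟩
    have hvA : ∀ e : Fin 2, Matrix.diagonal (vv e) ∈ S := by
      intro e
      fin_cases e
      · rw [hS]; exact Submodule.subset_span (by left; rw [hA₁]; rfl)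
      · rw [hS]; exact Submodule.subset_span (by right; rw [hA₂]; rfl)
    have hdiag : ∀ j, ρ j j = ((ρ j j).re : ℂ) :=
      fun j => Complex.eq_re_of_ofReal_le (by exact_mod_cast diag_entry_psd hρ j)
    have hcond : ∀ ε : Fin N → Fin 2,
        ∑ j, ((ρ j j).re : ℂ) * ∏ i, vv (ε i) (j i) = 0 := by
      intro ε
      have hmem : tensorProd (fun i => Matrix.diagonal (vv (ε i))) ∈ tensorPowSpan S N :=
        Submodule.subset_span ⟨_, fun i => hvA (ε i), rfl⟩
      have htr := horth _ hmem
      rw [Matrix.trace] at htr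
      rw [← htr]
      refine Finset.sum_congr rfl fun j _ => ?_
      rw [Matrix.diag_apply, Matrix.mul_apply]
      rw [Finset.sum_eq_single j]
      · rw [← hdiag j]
        congr 1
        unfold tensorProd
        exact Finset.prod_congr rfl fun i _ => (Matrix.diagonal_apply_eq _ _).symm
      · intro k _ hk
        have : ∃ i, k i ≠ j i := Function.ne_iff.mp hk
        obtain ⟨i, hi⟩ := this
        have : tensorProd (fun i => Matrix.diagonal (vv (ε i))) k j = 0 := by
          unfold tensorProd
          exact Finset.prod_eq_zero (Finset.mem_univ i) (Matrix.diagonal_apply_ne _ hi)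
        rw [this, mul_zero]
      · intro h; exact absurd (Finset.mem_univ j) h
    have hp0 : ∀ j, (ρ j j).re = 0 := by
      refine key N (fun j => (ρ j j).re) (fun j => ?_) hcond
      have h := diag_entry_psd hρ j
      rw [Complex.le_def] at h
      simpa using h.1
    exact hne (psd_diag_zero_eq_zero hρ (fun j => by rw [hdiag j, hp0 j]; simp))
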